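/- For every w ∈ ℕ and every δ > 0, there is a two-layer pipeline instance with budget B ∈ (0, 2] and all edges malleable whose price of fairness P_f = OPT_SW / W_fair is at least w − δ, where OPT_SW is the maximal welfare under budget B and W_fair is the welfare of the (unique) maximin-optimal solution. -/

import Mathlib

open Matrix Finset

noncomputable section

/-- ℓ1 norm of a vector. -/
def l1 {w : ℕ} (x : Fin w → ℝ) : ℝ := ∑ i, |x i|

/-- ℓ∞ norm of a vector. -/
def linf {w : ℕ} (x : Fin w → ℝ) : ℝ := ⨆ i, |x i|

/-- Left (column-)stochastic matrix: nonnegative entries, each column sums to 1. -/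
def IsStoch {a b : ℕ} (M : Matrix (Fin a) (Fin b) ℝ) : Prop :=
  (∀ i j, 0 ≤ M i j) ∧ ∀ j, ∑ i, M i j = 1

/-- Probability vector. -/
def IsProb {w : ℕ} (D : Fin w → ℝ) : Prop := (∀ i, 0 ≤ D i) ∧ ∑ i, D i = 1

/-- Entrywise ℓ1 cost of modifying M0 into M. -/
def cost {a b : ℕ} (M M0 : Matrix (Fin a) (Fin b) ℝ) : ℝ := ∑ i, ∑ j, |M i j - M0 i j|

/-- The product M (n-1) * ⋯ * M 0 (so that `M 0` is applied first to a vector). -/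
def chainProd {n w : ℕ} (M : Fin n → Matrix (Fin w) (Fin w) ℝ) : Matrix (Fin w) (Fin w) ℝ :=
  ((List.ofFn M).reverse).prod

/-- Initial transition matrix of the two-layer example: every starting node goes
to the reward-0 node (node 1 of the final layer) with probability 1. -/
def M0ex (w : ℕ) : Matrix (Fin 2) (Fin w) ℝ := Matrix.of fun i _ => if i = 0 then 0 else 1

/-- Starting distribution (1 - (w-1)ε, ε, …, ε). -/
def D1ex (w : ℕ) (ε : ℝ) : Fin w → ℝ := fun j => if (j : ℕ) = 0 then 1 - ((w : ℝ) - 1) * ε else ε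

/-- Reward vector (1, 0) on the two final nodes. -/
def Rex : Fin 2 → ℝ := ![1, 0]

lemma welf {w : ℕ} (M : Matrix (Fin 2) (Fin w) ℝ) (D : Fin w → ℝ) :
    Rex ⬝ᵥ M.mulVec D = ∑ j, M 0 j * D j := by
  simp [Rex, dotProduct, Matrix.mulVec, Fin.sum_univ_two]

lemma welfS {w : ℕ} (M : Matrix (Fin 2) (Fin w) ℝ) (j : Fin w) :
    Rex ⬝ᵥ M.mulVec (Pi.single j 1) = M 0 j := by
  rw [welf]
  rw [Finset.sum_eq_single j]
  · simp
  · intro k _ hk; simp [Pi.single_eq_of_ne hk]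
  · simp

lemma costeq {w : ℕ} (M : Matrix (Fin 2) (Fin w) ℝ)
    (h0 : ∀ i j, 0 ≤ M i j) (h1 : ∀ j, ∑ i, M i j = 1) :
    cost M (M0ex w) = 2 * ∑ j, M 0 j := by
  have hM1 : ∀ j, M 1 j = 1 - M 0 j := by
    intro j; have := h1 j; rw [Fin.sum_univ_two] at this; linarith
  have e1 : cost M (M0ex w) = (∑ j, |M 0 j - 0|) + ∑ j, |M 1 j - 1| := by
    simp [cost, Fin.sum_univ_two, M0ex]
  rw [e1]
  have e2 : ∀ j : Fin w, |M 0 j - 0| = M 0 j := fun j => by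
    simp [abs_of_nonneg (h0 0 j)]
  have e3 : ∀ j : Fin w, |M 1 j - 1| = M 0 j := fun j => by
    have : M 1 j - 1 = -(M 0 j) := by rw [hM1]; ring
    simp [this, abs_of_nonneg (h0 0 j)]
  rw [Finset.sum_congr rfl fun j _ => e2 j, Finset.sum_congr rfl fun j _ => e3 j]
  ring

lemma valzero {w : ℕ} [NeZero w] (j : Fin w) : (j:ℕ) = 0 ↔ j = 0 := by
  constructor
  · intro h; exact Fin.ext h
  · intro h; subst h; simp

theorem stmt10 (w : ℕ) (hw : 0 < w) (δ : ℝ) (hδ : 0 < δ) :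
    ∃ ε B OPT : ℝ, 0 < ε ∧ 0 < B ∧ B ≤ 2 ∧
      IsGreatest
        {x : ℝ | ∃ M : Matrix (Fin 2) (Fin w) ℝ,
          IsStoch M ∧ cost M (M0ex w) ≤ B ∧ x = Rex ⬝ᵥ M.mulVec (D1ex w ε)} OPT ∧
      ∀ Mf : Matrix (Fin 2) (Fin w) ℝ, IsStoch Mf → cost Mf (M0ex w) ≤ B →
        IsGreatest
          {x : ℝ | ∃ M : Matrix (Fin 2) (Fin w) ℝ,
            IsStoch M ∧ cost M (M0ex w) ≤ B ∧
            x = ⨅ j : Fin w, Rex ⬝ᵥ M.mulVec (Pi.single j 1)}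
          (⨅ j : Fin w, Rex ⬝ᵥ Mf.mulVec (Pi.single j 1)) →
        (w : ℝ) - δ ≤ OPT / (Rex ⬝ᵥ Mf.mulVec (D1ex w ε)) := by
  haveI : NeZero w := ⟨hw.ne'⟩
  haveI : Nonempty (Fin w) := ⟨0⟩
  set W : ℝ := (w : ℝ) with hWdef
  have hW1 : (1:ℝ) ≤ W := by exact_mod_cast Nat.one_le_cast.mpr hw
  have hWpos : (0:ℝ) < W := by linarith
  set ε : ℝ := min (δ / (W^2+1)) (1 / (W^2+1)) with hεdef
  have hεpos : 0 < ε := lt_min (by positivity) (by positivity)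
  have hεδ : W^2 * ε ≤ δ := by
    have h1 : ε ≤ δ / (W^2+1) := min_le_left _ _
    have h2 : (0:ℝ) < W^2+1 := by positivity
    rw [le_div_iff₀ h2] at h1
    nlinarith
  have hεw : W * ε ≤ 1 := by
    have h1 : ε ≤ 1 / (W^2+1) := min_le_right _ _
    have h2 : (0:ℝ) < W^2+1 := by positivity
    rw [le_div_iff₀ h2] at h1
    nlinarith
  -- D facts
  have hD0 : D1ex w ε 0 = 1 - (W-1)*ε := by simp [D1ex, hWdef]
  have hDle : ∀ j : Fin w, D1ex w ε j ≤ 1 - (W-1)*ε := by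
    intro j
    by_cases h : (j:ℕ) = 0
    · simp [D1ex, h, hWdef]
    · simp only [D1ex, h, if_false]; nlinarith
  have hDnn : ∀ j : Fin w, 0 ≤ D1ex w ε j := by
    intro j
    by_cases h : (j:ℕ) = 0
    · simp only [D1ex, h, if_true]; nlinarith
    · simp only [D1ex, h, if_false]; linarith
  have hDsum : ∑ j, D1ex w ε j = 1 := by
    have e : ∀ j : Fin w, D1ex w ε j
        = (if j = 0 then (1 - (W-1)*ε - ε) else 0) + ε := by
      intro j
      rcases eq_or_ne j 0 with h | h
      · subst h; simp [D1ex, hWdef]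
      · have h' : (j:ℕ) ≠ 0 := fun hc => h ((valzero j).1 hc)
        simp [D1ex, h', h]
    rw [Finset.sum_congr rfl fun j _ => e j, Finset.sum_add_distrib,
      Finset.sum_ite_eq' univ (0 : Fin w), Finset.sum_const, Finset.card_univ,
      Fintype.card_fin, nsmul_eq_mul]
    simp only [mem_univ, if_true]
    rw [← hWdef]
    ring
  have indsum : (∑ j : Fin w, if (j:ℕ) = 0 then (1:ℝ) else 0) = 1 := by
    have e : ∀ j : Fin w, (if (j:ℕ) = 0 then (1:ℝ) else 0) = if j = 0 then 1 else 0 := by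
      intro j; simp [valzero]
    rw [Finset.sum_congr rfl fun j _ => e j, Finset.sum_ite_eq' univ (0 : Fin w)]
    simp
  -- feasible sums bounded by 1
  have hfeas : ∀ M : Matrix (Fin 2) (Fin w) ℝ, IsStoch M → cost M (M0ex w) ≤ 2 →
      ∑ j, M 0 j ≤ 1 := by
    intro M hM hc
    have := costeq M hM.1 hM.2
    linarith
  refine ⟨ε, 2, 1 - (W-1)*ε, hεpos, two_pos, le_refl 2, ⟨?_, ?_⟩, ?_⟩
  · -- membership for OPT
    refine ⟨Matrix.of fun i j => if (j:ℕ) = 0 then (if i = 0 then (1:ℝ) else 0)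
        else (if i = 0 then 0 else 1), ⟨?_, ?_⟩, ?_, ?_⟩
    · intro i j; dsimp only [Matrix.of_apply]; split <;> split <;> norm_num
    · intro j; rw [Fin.sum_univ_two]; dsimp only [Matrix.of_apply]; split <;> norm_num
    · rw [costeq]
      · simp only [Matrix.of_apply, Fin.isValue, ↓reduceIte]
        rw [indsum]; norm_num
      · intro i j; dsimp only [Matrix.of_apply]; split <;> split <;> norm_num
      · intro j; rw [Fin.sum_univ_two]; dsimp only [Matrix.of_apply]; split <;> norm_num
    · rw [welf]
      simp only [Matrix.of_apply, Fin.isValue, ↓reduceIte]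
      rw [Finset.sum_eq_single (0 : Fin w)]
      · simp [hD0]
      · intro k _ hk
        have h' : (k:ℕ) ≠ 0 := fun hc => hk ((valzero k).1 hc)
        simp [h']
      · simp
  · -- upper bound for OPT
    rintro x ⟨M, hM, hc, rfl⟩
    rw [welf]
    have h1 : ∀ j : Fin w, M 0 j * D1ex w ε j ≤ M 0 j * (1 - (W-1)*ε) := by
      intro j; exact mul_le_mul_of_nonneg_left (hDle j) (hM.1 0 j)
    calc ∑ j, M 0 j * D1ex w ε j ≤ ∑ j, M 0 j * (1 - (W-1)*ε) :=
          Finset.sum_le_sum fun j _ => h1 j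
      _ = (∑ j, M 0 j) * (1 - (W-1)*ε) := by rw [← Finset.sum_mul]
      _ ≤ 1 * (1 - (W-1)*ε) := by
          apply mul_le_mul_of_nonneg_right (hfeas M hM hc)
          nlinarith
      _ = 1 - (W-1)*ε := one_mul _
  · -- fairness part
    intro Mf hMf hMfc hGreat
    -- uniform matrix is feasible with maximin value 1/W
    have hWne : W ≠ 0 := hWpos.ne'
    have hmem : (1/W : ℝ) ∈ {x : ℝ | ∃ M : Matrix (Fin 2) (Fin w) ℝ,
        IsStoch M ∧ cost M (M0ex w) ≤ 2 ∧
        x = ⨅ j : Fin w, Rex ⬝ᵥ M.mulVec (Pi.single j 1)} := by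
      refine ⟨Matrix.of fun i _ => if i = 0 then 1/W else 1 - 1/W, ⟨?_, ?_⟩, ?_, ?_⟩
      · intro i j; dsimp only [Matrix.of_apply]; split
        · positivity
        · have : 1/W ≤ 1 := by rw [div_le_one hWpos]; linarith
          linarith
      · intro j; rw [Fin.sum_univ_two]; norm_num
      · rw [costeq]
        · simp only [Matrix.of_apply, Fin.isValue, ↓reduceIte]
          rw [Finset.sum_const, Finset.card_univ, Fintype.card_fin, nsmul_eq_mul,
            ← hWdef, mul_one_div, div_self hWne]
          norm_num
        · intro i j; dsimp only [Matrix.of_apply]; split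
          · positivity
          · have : 1/W ≤ 1 := by rw [div_le_one hWpos]; linarith
            linarith
        · intro j; rw [Fin.sum_univ_two]; norm_num
      · have : ∀ j : Fin w, Rex ⬝ᵥ (Matrix.of fun i (_ : Fin w) =>
            if i = 0 then 1/W else 1 - 1/W).mulVec (Pi.single j 1) = 1/W := by
          intro j; rw [welfS]; simp
        rw [iInf_congr this, ciInf_const]
    -- Mf's maximin value
    have hinf : (⨅ j : Fin w, Rex ⬝ᵥ Mf.mulVec (Pi.single j 1)) = ⨅ j : Fin w, Mf 0 j :=
      iInf_congr fun j => welfS Mf j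
    have hub : 1/W ≤ ⨅ j : Fin w, Mf 0 j := by
      rw [← hinf]; exact hGreat.2 hmem
    have hlow : ∀ j : Fin w, 1/W ≤ Mf 0 j := by
      intro j
      exact le_trans hub (ciInf_le (Set.finite_range _).bddBelow j)
    have hsum : ∑ j, Mf 0 j ≤ 1 := hfeas Mf hMf hMfc
    have hsumge : (1:ℝ) ≤ ∑ j, Mf 0 j := by
      calc (1:ℝ) = ∑ _j : Fin w, 1/W := by
            rw [Finset.sum_const, Finset.card_univ, Fintype.card_fin, nsmul_eq_mul,
              ← hWdef, mul_one_div, div_self hWne]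
        _ ≤ ∑ j, Mf 0 j := Finset.sum_le_sum fun j _ => hlow j
    have heq : ∀ j : Fin w, Mf 0 j = 1/W := by
      intro j
      by_contra hne
      have hlt : 1/W < Mf 0 j := lt_of_le_of_ne (hlow j) (Ne.symm hne)
      have : (1:ℝ) < ∑ k, Mf 0 k := by
        calc (1:ℝ) = ∑ _k : Fin w, 1/W := by
              rw [Finset.sum_const, Finset.card_univ, Fintype.card_fin, nsmul_eq_mul,
                ← hWdef, mul_one_div, div_self hWne]
          _ < ∑ k, Mf 0 k := by
              apply Finset.sum_lt_sum (fun k _ => hlow k) ⟨j, Finset.mem_univ j, hlt⟩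
      linarith
    -- welfare of Mf
    have hwelf : Rex ⬝ᵥ Mf.mulVec (D1ex w ε) = 1/W := by
      rw [welf]
      rw [Finset.sum_congr rfl fun j _ => by rw [heq j]]
      rw [← Finset.mul_sum, hDsum, mul_one]
    rw [hwelf, one_div, div_inv_eq_mul]
    nlinarith

end
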